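/- Let A ∈ ℝ^{n×d}, let μ ∈ ℝ^d be the mean of the rows of A, and let A' = A − 𝟙μᵀ be obtained by subtracting μ from every row. Let ε > 0, let j ∈ {1,…,d−1}, and suppose S' ∈ ℝ^{m×d} and Δ ≥ 0 satisfy, for every j-dimensional linear subspace L of ℝ^d, dist²(A',L) ≤ dist²(S',L) + Δ ≤ (1+ε)·dist²(A',L). Define S ∈ ℝ^{2m×d} by S_{i*} = μ + √(m/n)·S'_{i*} for 1 ≤ i ≤ m and S_{(m+i)*} = μ − √(m/n)·S'_{i*} for 1 ≤ i ≤ m. Then for every affine j-dimensional subspace C of ℝ^d, dist²(A,C) ≤ (n/(2m))·Σ_{i=1}^{2m} dist²(S_{i*},C) + Δ ≤ (1+ε)·dist²(A,C). -/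

import Mathlib

open Matrix

noncomputable def toEuc {d : ℕ} (v : Fin d → ℝ) : EuclideanSpace ℝ (Fin d) :=
  (WithLp.equiv 2 (Fin d → ℝ)).symm v

noncomputable def rowDistSq {d : ℕ} (p : Fin d → ℝ) (C : Set (EuclideanSpace ℝ (Fin d))) : ℝ :=
  (Metric.infDist (toEuc p) C) ^ 2

noncomputable def matDistSq {n d : ℕ} (A : Matrix (Fin n) (Fin d) ℝ)
    (C : Set (EuclideanSpace ℝ (Fin d))) : ℝ :=
  ∑ i, rowDistSq (A i) C

noncomputable def frobSq {n d : ℕ} (A : Matrix (Fin n) (Fin d) ℝ) : ℝ :=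
  ∑ i, ∑ j, (A i j) ^ 2

lemma infDist_submodule {d : ℕ} (L : Submodule ℝ (EuclideanSpace ℝ (Fin d)))
    (x : EuclideanSpace ℝ (Fin d)) :
    Metric.infDist x (L : Set (EuclideanSpace ℝ (Fin d)))
      = ‖x - (L.orthogonalProjectionOnto x : EuclideanSpace ℝ (Fin d))‖ := by
  rw [Metric.infDist_eq_iInf, ← Submodule.starProjection_apply, Submodule.starProjection_minimal]
  simp only [dist_eq_norm]
  rfl

lemma sum_split_two_mul {m : ℕ} (F : Fin (2*m) → ℝ) :
    ∑ i, F i = (∑ i : Fin m, F ⟨i.1, by omega⟩) + ∑ i : Fin m, F ⟨m + i.1, by omega⟩ := by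
  calc ∑ i, F i = ∑ i : Fin (m+m), F (finCongr (by omega : m+m=2*m) i) :=
        (Fintype.sum_equiv (finCongr (by omega : m+m=2*m)) _ _ (fun i => rfl)).symm
    _ = _ := by
        rw [Fin.sum_univ_add]
        congr 1 <;> exact Finset.sum_congr rfl fun i _ => rfl

theorem stmt6 {n d j m : ℕ} (hn : 1 ≤ n) (hm : 1 ≤ m)
    (A : Matrix (Fin n) (Fin d) ℝ) (μ : Fin d → ℝ)
    (hμ : ∀ l, μ l = (∑ i, A i l) / n)
    (A' : Matrix (Fin n) (Fin d) ℝ) (hA' : ∀ i l, A' i l = A i l - μ l)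
    (ε : ℝ) (hε : 0 < ε) (hj1 : 1 ≤ j) (hj2 : j < d)
    (S' : Matrix (Fin m) (Fin d) ℝ) (Δ : ℝ) (hΔ : 0 ≤ Δ)
    (hcore : ∀ L : Submodule ℝ (EuclideanSpace ℝ (Fin d)), Module.finrank ℝ L = j →
      matDistSq A' (L : Set (EuclideanSpace ℝ (Fin d))) ≤
          matDistSq S' (L : Set (EuclideanSpace ℝ (Fin d))) + Δ ∧
        matDistSq S' (L : Set (EuclideanSpace ℝ (Fin d))) + Δ ≤
          (1 + ε) * matDistSq A' (L : Set (EuclideanSpace ℝ (Fin d))))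
    (S : Matrix (Fin (2 * m)) (Fin d) ℝ)
    (hS₁ : ∀ (i : Fin m) (l : Fin d),
      S ⟨i.val, by have := i.isLt; omega⟩ l = μ l + Real.sqrt ((m : ℝ) / n) * S' i l)
    (hS₂ : ∀ (i : Fin m) (l : Fin d),
      S ⟨m + i.val, by have := i.isLt; omega⟩ l = μ l - Real.sqrt ((m : ℝ) / n) * S' i l) :
    ∀ (p : EuclideanSpace ℝ (Fin d)) (L : Submodule ℝ (EuclideanSpace ℝ (Fin d))),
      Module.finrank ℝ L = j →
      matDistSq A ((fun x => p + x) '' (L : Set (EuclideanSpace ℝ (Fin d)))) ≤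
          ((n : ℝ) / (2 * m)) *
              matDistSq S ((fun x => p + x) '' (L : Set (EuclideanSpace ℝ (Fin d)))) + Δ ∧
        ((n : ℝ) / (2 * m)) *
              matDistSq S ((fun x => p + x) '' (L : Set (EuclideanSpace ℝ (Fin d)))) + Δ ≤
          (1 + ε) * matDistSq A ((fun x => p + x) '' (L : Set (EuclideanSpace ℝ (Fin d)))) := by
  intro p L hL
  classical
  obtain ⟨h1, h2⟩ := hcore L hL
  have hn0 : (0:ℝ) < n := by exact_mod_cast hn
  have hm0 : (0:ℝ) < m := by exact_mod_cast hm
  set C : Set (EuclideanSpace ℝ (Fin d)) :=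
    (fun x => p + x) '' (L : Set (EuclideanSpace ℝ (Fin d))) with hCdef
  set g : EuclideanSpace ℝ (Fin d) →ₗ[ℝ] EuclideanSpace ℝ (Fin d) :=
    LinearMap.id - L.subtype ∘ₗ (L.orthogonalProjectionOnto).toLinearMap with hgdef
  have hg : ∀ x, g x = x - (L.orthogonalProjectionOnto x : EuclideanSpace ℝ (Fin d)) := fun x => rfl
  have hdistL : ∀ x, Metric.infDist x (L : Set (EuclideanSpace ℝ (Fin d))) = ‖g x‖ := by
    intro x; rw [infDist_submodule, hg]
  have hiso : Isometry (fun x : EuclideanSpace ℝ (Fin d) => p + x) :=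
    Isometry.of_dist_eq fun a b => by simp [dist_eq_norm]
  have hdistC : ∀ x, Metric.infDist x C = ‖g (x - p)‖ := by
    intro x
    calc Metric.infDist x C = Metric.infDist (p + (x - p)) C := by rw [add_sub_cancel]
      _ = Metric.infDist (x - p) (L : Set (EuclideanSpace ℝ (Fin d))) :=
          Metric.infDist_image hiso
      _ = ‖g (x - p)‖ := hdistL _
  set c : ℝ := Real.sqrt ((m:ℝ)/n) with hc
  have hc2 : c^2 = (m:ℝ)/n := Real.sq_sqrt (by positivity)
  -- sum of centered rows is zero
  have hA'sum : ∑ i, toEuc (A' i) = 0 := by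
    ext l
    have h0 : (∑ i, toEuc (A' i)) l = ∑ i, A' i l := by
      simp [toEuc]
      exact Finset.sum_apply _ _ _
    show (∑ i, toEuc (A' i)) l = (0:ℝ)
    rw [h0]
    simp only [hA', Finset.sum_sub_distrib, Finset.sum_const, Finset.card_univ,
      Fintype.card_fin, nsmul_eq_mul, hμ]
    field_simp
    ring
  have hαsum : ∑ i, g (toEuc (A' i)) = 0 := by
    rw [← map_sum, hA'sum, map_zero]
  -- row decompositions
  have hrowA : ∀ i : Fin n, toEuc (A i) - p = toEuc (A' i) + (toEuc μ - p) := by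
    intro i; ext l
    show A i l - p l = A' i l + (μ l - p l)
    rw [hA' i l]; ring
  have hrowS1 : ∀ (i : Fin m) (h : (i:ℕ) < 2*m),
      toEuc (S ⟨i.1, h⟩) - p = (toEuc μ - p) + c • toEuc (S' i) := by
    intro i h; ext l
    show S ⟨i.1, h⟩ l - p l = (μ l - p l) + c * S' i l
    rw [hS₁ i l]; ring
  have hrowS2 : ∀ (i : Fin m) (h : m + (i:ℕ) < 2*m),
      toEuc (S ⟨m + i.1, h⟩) - p = (toEuc μ - p) - c • toEuc (S' i) := by
    intro i h; ext l
    show S ⟨m + i.1, h⟩ l - p l = (μ l - p l) - c * S' i l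
    rw [hS₂ i l]; ring
  -- the four distance computations
  have hX : matDistSq A' (L : Set (EuclideanSpace ℝ (Fin d))) = ∑ i, ‖g (toEuc (A' i))‖^2 := by
    unfold matDistSq rowDistSq
    exact Finset.sum_congr rfl fun i _ => by rw [hdistL]
  have hY : matDistSq S' (L : Set (EuclideanSpace ℝ (Fin d))) = ∑ i, ‖g (toEuc (S' i))‖^2 := by
    unfold matDistSq rowDistSq
    exact Finset.sum_congr rfl fun i _ => by rw [hdistL]
  have hAC : matDistSq A C = (∑ i, ‖g (toEuc (A' i))‖^2) + n * ‖g (toEuc μ - p)‖^2 := by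
    unfold matDistSq rowDistSq
    have hterm : ∀ i : Fin n, Metric.infDist (toEuc (A i)) C ^ 2
        = ‖g (toEuc (A' i))‖^2
          + 2 * (inner ℝ (g (toEuc (A' i))) (g (toEuc μ - p)) : ℝ)
          + ‖g (toEuc μ - p)‖^2 := by
      intro i
      rw [hdistC, hrowA i, map_add]
      exact norm_add_sq_real _ _
    rw [Finset.sum_congr rfl fun i _ => hterm i, Finset.sum_add_distrib,
      Finset.sum_add_distrib, ← Finset.mul_sum, ← sum_inner, hαsum, inner_zero_left,
      mul_zero, add_zero, Finset.sum_const, Finset.card_univ, Fintype.card_fin,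
      nsmul_eq_mul]
  have hSC : matDistSq S C
      = 2*m*‖g (toEuc μ - p)‖^2 + 2*((m:ℝ)/n) * ∑ i, ‖g (toEuc (S' i))‖^2 := by
    unfold matDistSq rowDistSq
    rw [sum_split_two_mul (fun i => Metric.infDist (toEuc (S i)) C ^ 2)]
    have hterm1 : ∀ i : Fin m, Metric.infDist (toEuc (S ⟨i.1, by omega⟩)) C ^ 2
        = ‖g (toEuc μ - p)‖^2
          + 2 * c * (inner ℝ (g (toEuc μ - p)) (g (toEuc (S' i))) : ℝ)
          + ((m:ℝ)/n) * ‖g (toEuc (S' i))‖^2 := by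
      intro i
      rw [hdistC, hrowS1 i (by omega), map_add, LinearMap.map_smul, norm_add_sq_real,
        inner_smul_right, norm_smul]
      simp only [Real.norm_eq_abs]
      rw [mul_pow, sq_abs, hc2]
      ring
    have hterm2 : ∀ i : Fin m, Metric.infDist (toEuc (S ⟨m + i.1, by omega⟩)) C ^ 2
        = ‖g (toEuc μ - p)‖^2
          - 2 * c * (inner ℝ (g (toEuc μ - p)) (g (toEuc (S' i))) : ℝ)
          + ((m:ℝ)/n) * ‖g (toEuc (S' i))‖^2 := by
      intro i
      rw [hdistC, hrowS2 i (by omega), map_sub, LinearMap.map_smul, norm_sub_sq_real,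
        inner_smul_right, norm_smul]
      simp only [Real.norm_eq_abs]
      rw [mul_pow, sq_abs, hc2]
      ring
    rw [Finset.sum_congr rfl fun i _ => hterm1 i, Finset.sum_congr rfl fun i _ => hterm2 i,
      ← Finset.sum_add_distrib]
    have hcomb : ∀ i : Fin m,
        (‖g (toEuc μ - p)‖^2
          + 2 * c * (inner ℝ (g (toEuc μ - p)) (g (toEuc (S' i))) : ℝ)
          + ((m:ℝ)/n) * ‖g (toEuc (S' i))‖^2)
        + (‖g (toEuc μ - p)‖^2
          - 2 * c * (inner ℝ (g (toEuc μ - p)) (g (toEuc (S' i))) : ℝ)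
          + ((m:ℝ)/n) * ‖g (toEuc (S' i))‖^2)
        = 2*‖g (toEuc μ - p)‖^2 + 2*((m:ℝ)/n) * ‖g (toEuc (S' i))‖^2 := fun i => by ring
    rw [Finset.sum_congr rfl fun i _ => hcomb i, Finset.sum_add_distrib, Finset.sum_const,
      Finset.card_univ, Fintype.card_fin, nsmul_eq_mul, ← Finset.mul_sum]
    ring
  rw [hX, hY] at h1 h2
  rw [hAC, hSC]
  have hhalf : (n:ℝ)/(2*m) * (2*m*‖g (toEuc μ - p)‖^2
        + 2*((m:ℝ)/n) * ∑ i, ‖g (toEuc (S' i))‖^2)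
      = (n:ℝ)*‖g (toEuc μ - p)‖^2 + ∑ i, ‖g (toEuc (S' i))‖^2 := by
    field_simp
  rw [hhalf]
  have hT : (0:ℝ) ≤ ‖g (toEuc μ - p)‖^2 := sq_nonneg _
  constructor
  · linarith
  · nlinarith [mul_nonneg (mul_nonneg hε.le hn0.le) hT]
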